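/- For every n ≥ 1, the set ⟦⟨start, s_n⟩⟧_OI of outputs of the mtt M_ex in OI-mode on input s_n equals the set of all perfect {f,g}-trees of height 2^n; in particular, this set has cardinality 2^(2^(2^n) − 1). -/
import Mathlib


namespace MttF

/-- Finite ordered trees over a label type `α`. -/
inductive RTree (α : Type) : Type
  | node : α → List (RTree α) → RTree α

namespace RTree

variable {α β : Type}

/-- The root label of a tree. -/
def label : RTree α → α
  | node a _ => a

/-- The list of immediate subtrees of a tree. -/
def children : RTree α → List (RTree α)
  | node _ ts => ts

/-- Relabelling of trees. -/
def map (f : α → β) : RTree α → RTree β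
  | node a ts => node (f a) (ts.attach.map (fun x => map f x.1))
decreasing_by
  have := List.sizeOf_lt_of_mem x.2
  simp only [node.sizeOf_spec]
  omega

/-- A tree is well-formed with respect to a rank function if every node labeled
by a rank-`k` symbol has exactly `k` children. `T_Σ` is the set of well-formed
trees over `Σ`. -/
inductive Wf (rk : α → ℕ) : RTree α → Prop
  | node {a : α} {ts : List (RTree α)} :
      ts.length = rk a → (∀ t ∈ ts, Wf rk t) → Wf rk (node a ts)

/-- `Subtree u t` holds iff `u` is a subtree of `t` (rooted at some node of `t`). -/
inductive Subtree : RTree α → RTree α → Prop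
  | refl (t : RTree α) : Subtree t t
  | step {u c : RTree α} {a : α} {ts : List (RTree α)} :
      c ∈ ts → Subtree u c → Subtree u (node a ts)

end RTree

/-- Labels for output trees with parameters: trees over `Δ ∪ Y`. -/
inductive OLab (Δ : Type) : Type
  | out (d : Δ)
  | param (i : ℕ)

/-- Labels for right-hand sides of mtt rules: trees over `Δ ∪ (Q × X) ∪ Y`
(the second component of a call is the index of the input variable `x`). -/
inductive RLab (Δ Q : Type) : Type
  | out (d : Δ)
  | call (q : Q) (x : ℕ)
  | param (i : ℕ)

/-- Labels for "semantic" trees over `Δ ∪ (Q × T_Σ) ∪ Y`. -/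
inductive SLab (Γ Δ Q : Type) : Type
  | out (d : Δ)
  | call (q : Q) (s : RTree Γ)
  | param (i : ℕ)

/-- Trees over `Δ ∪ Y`. -/
abbrev OT (Δ : Type) := RTree (OLab Δ)
/-- Right-hand side trees over `Δ ∪ (Q × X) ∪ Y`. -/
abbrev Rhs (Δ Q : Type) := RTree (RLab Δ Q)
/-- Trees over `Δ ∪ (Q × T_Σ) ∪ Y`. -/
abbrev ST (Γ Δ Q : Type) := RTree (SLab Γ Δ Q)

/-- First-order substitution `x_i := ss_i` on a label of a right-hand side
(indices are 0-based; for well-formed rules the index is always in range). -/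
def RLab.subst {Γ Δ Q : Type} (ss : List (RTree Γ)) : RLab Δ Q → SLab Γ Δ Q
  | .out d => .out d
  | .param i => .param i
  | .call q x =>
    match ss[x]? with
    | some s => .call q s
    | none => .param x

/-- `r[x_1/s_1, …, x_k/s_k]`. -/
def substX {Γ Δ Q : Type} (ss : List (RTree Γ)) (r : Rhs Δ Q) : ST Γ Δ Q :=
  r.map (RLab.subst ss)

/-- Second-order (parameter) substitution `t[y_1/ts_1, …, y_n/ts_n]`
(`y` indices are 0-based). -/
def substY {Δ : Type} (ts : List (OT Δ)) : OT Δ → OT Δ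
  | .node (.param i) _ => ts.getD i (.node (.param i) [])
  | .node (.out d) us => .node (.out d) (us.attach.map (fun x => substY ts x.1))
decreasing_by
  have := List.sizeOf_lt_of_mem x.2
  simp only [RTree.node.sizeOf_spec]
  omega

/-- The embedding of `T_Δ` into the trees over `Δ ∪ Y`. -/
def embed {Δ : Type} (t : RTree Δ) : OT Δ := t.map OLab.out

variable {Γ Δ Q : Type}

/-- IO (call-by-value, inside-out) semantics: `SemIO rsel u t` holds iff
`t ∈ ⟦u⟧_IO`.  The rules of the transducer are given by a selector
`rsel q σ ss`: the set of right-hand sides of the `⟨q,σ⟩`-rules that are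
applicable when the children of the current input node are `ss` (for a plain
mtt this does not depend on `ss`, cf. `plainSel`). -/
inductive SemIO (rsel : Q → Γ → List (RTree Γ) → Set (Rhs Δ Q)) :
    ST Γ Δ Q → OT Δ → Prop
  | param (i : ℕ) :
      SemIO rsel (.node (.param i) []) (.node (.param i) [])
  | out {d : Δ} {us : List (ST Γ Δ Q)} {ts : List (OT Δ)}
      (hlen : ts.length = us.length)
      (h : ∀ i : Fin us.length, SemIO rsel (us.get i) (ts.get (i.cast hlen.symm))) :
      SemIO rsel (.node (.out d) us) (.node (.out d) ts)
  | call {q : Q} {σ : Γ} {ss : List (RTree Γ)} {us : List (ST Γ Δ Q)}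
      {r : Rhs Δ Q} {t₀ : OT Δ} {ts : List (OT Δ)}
      (hr : r ∈ rsel q σ ss)
      (h₀ : SemIO rsel (substX ss r) t₀)
      (hlen : ts.length = us.length)
      (h : ∀ i : Fin us.length, SemIO rsel (us.get i) (ts.get (i.cast hlen.symm))) :
      SemIO rsel (.node (.call q (.node σ ss)) us) (substY ts t₀)

mutual
/-- OI (call-by-name, outside-in) semantics: `SemOI rsel u t` holds iff
`t ∈ ⟦u⟧_OI`. -/
inductive SemOI (rsel : Q → Γ → List (RTree Γ) → Set (Rhs Δ Q)) :
    ST Γ Δ Q → OT Δ → Prop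
  | param (i : ℕ) :
      SemOI rsel (.node (.param i) []) (.node (.param i) [])
  | out {d : Δ} {us : List (ST Γ Δ Q)} {ts : List (OT Δ)}
      (hlen : ts.length = us.length)
      (h : ∀ i : Fin us.length, SemOI rsel (us.get i) (ts.get (i.cast hlen.symm))) :
      SemOI rsel (.node (.out d) us) (.node (.out d) ts)
  | call {q : Q} {σ : Γ} {ss : List (RTree Γ)} {us : List (ST Γ Δ Q)}
      {r : Rhs Δ Q} {t₀ : OT Δ} {t : OT Δ}
      (hr : r ∈ rsel q σ ss)
      (h₀ : SemOI rsel (substX ss r) t₀)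
      (hs : OISub rsel us t₀ t) :
      SemOI rsel (.node (.call q (.node σ ss)) us) t

/-- OI-substitution: `OISub rsel us t₀ t` holds iff `t ∈ (t₀ ←_OI (⟦us_1⟧_OI, …, ⟦us_n⟧_OI))`,
i.e. `t` is obtained from `t₀` by independently replacing every occurrence of a parameter
`y_i` by some member of `⟦us_i⟧_OI`. -/
inductive OISub (rsel : Q → Γ → List (RTree Γ) → Set (Rhs Δ Q)) :
    List (ST Γ Δ Q) → OT Δ → OT Δ → Prop
  | param {us : List (ST Γ Δ Q)} {i : ℕ} {t : OT Δ}
      (h : i < us.length) (hsem : SemOI rsel (us.get ⟨i, h⟩) t) :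
      OISub rsel us (.node (.param i) []) t
  | out {us : List (ST Γ Δ Q)} {d : Δ} {ts ts' : List (OT Δ)}
      (hlen : ts'.length = ts.length)
      (h : ∀ i : Fin ts.length, OISub rsel us (ts.get i) (ts'.get (i.cast hlen.symm))) :
      OISub rsel us (.node (.out d) ts) (.node (.out d) ts')
end

/-- The rule selector of a plain mtt: the applicable rules do not depend on the
child subtrees of the current input node. -/
def plainSel (rules : Q → Γ → Set (Rhs Δ Q)) :
    Q → Γ → List (RTree Γ) → Set (Rhs Δ Q) :=
  fun q σ _ => rules q σ

/-- The translation `τ_{IO,M} ⊆ T_Σ × T_Δ` realized in IO mode. -/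
def tauIO (rankΓ : Γ → ℕ) (rankΔ : Δ → ℕ)
    (rsel : Q → Γ → List (RTree Γ) → Set (Rhs Δ Q)) (q₀ : Q) :
    Set (RTree Γ × RTree Δ) :=
  {p | p.1.Wf rankΓ ∧ p.2.Wf rankΔ ∧
       SemIO rsel (.node (.call q₀ p.1) []) (embed p.2)}

/-- The translation `τ_{OI,M} ⊆ T_Σ × T_Δ` realized in OI mode. -/
def tauOI (rankΓ : Γ → ℕ) (rankΔ : Δ → ℕ)
    (rsel : Q → Γ → List (RTree Γ) → Set (Rhs Δ Q)) (q₀ : Q) :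
    Set (RTree Γ × RTree Δ) :=
  {p | p.1.Wf rankΓ ∧ p.2.Wf rankΔ ∧
       SemOI rsel (.node (.call q₀ p.1) []) (embed p.2)}

/-- Well-formedness of a right-hand side of a rule of an mtt whose current
input symbol has rank `k` and whose current state has rank `m`: output symbols
have the correct number of children, state calls `⟨q', x_i⟩` have `rank q'`
children and `i < k`, and parameters `y_j` satisfy `j < m`. -/
inductive RhsWf (rankΔ : Δ → ℕ) (rankQ : Q → ℕ) (k m : ℕ) : Rhs Δ Q → Prop
  | out {d : Δ} {ts : List (Rhs Δ Q)}
      (hlen : ts.length = rankΔ d) (h : ∀ t ∈ ts, RhsWf rankΔ rankQ k m t) :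
      RhsWf rankΔ rankQ k m (.node (.out d) ts)
  | call {q : Q} {x : ℕ} {ts : List (Rhs Δ Q)}
      (hx : x < k) (hlen : ts.length = rankQ q)
      (h : ∀ t ∈ ts, RhsWf rankΔ rankQ k m t) :
      RhsWf rankΔ rankQ k m (.node (.call q x) ts)
  | param {i : ℕ} (hi : i < m) : RhsWf rankΔ rankQ k m (.node (.param i) [])

/-- Well-formedness of a tree over `Δ ∪ (Q × T_Σ) ∪ Y`. -/
inductive STWf (rankΓ : Γ → ℕ) (rankΔ : Δ → ℕ) (rankQ : Q → ℕ) : ST Γ Δ Q → Prop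
  | out {d : Δ} {ts : List (ST Γ Δ Q)}
      (hlen : ts.length = rankΔ d) (h : ∀ t ∈ ts, STWf rankΓ rankΔ rankQ t) :
      STWf rankΓ rankΔ rankQ (.node (.out d) ts)
  | call {q : Q} {s : RTree Γ} {ts : List (ST Γ Δ Q)}
      (hs : s.Wf rankΓ) (hlen : ts.length = rankQ q)
      (h : ∀ t ∈ ts, STWf rankΓ rankΔ rankQ t) :
      STWf rankΓ rankΔ rankQ (.node (.call q s) ts)
  | param (i : ℕ) : STWf rankΓ rankΔ rankQ (.node (.param i) [])

/-- A tree over `Δ ∪ (Q × T_Σ) ∪ Y` is parameter-free if no `y_i` occurs in it. -/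
inductive NoParam : ST Γ Δ Q → Prop
  | node {l : SLab Γ Δ Q} {ts : List (ST Γ Δ Q)}
      (hl : ∀ i : ℕ, l ≠ .param i) (h : ∀ t ∈ ts, NoParam t) :
      NoParam (.node l ts)

/-- A macro tree transducer `M = (Q, Σ, Δ, q₀, R)`.  The alphabets `Γ` (input),
`Δ` (output) and the set `Q` of states are ranked; `q₀` has rank `0`; `rules q σ`
is the (finite) set `R_{q,σ}` of right-hand sides of the `⟨q,σ⟩`-rules, and every
right-hand side is a well-formed tree over `Δ ∪ (Q × X_k) ∪ Y_m`. -/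
structure MTT (Γ Δ Q : Type) where
  rankΓ : Γ → ℕ
  rankΔ : Δ → ℕ
  rankQ : Q → ℕ
  q₀ : Q
  q₀_rank : rankQ q₀ = 0
  rules : Q → Γ → Set (Rhs Δ Q)
  rules_fin : ∀ q σ, (rules q σ).Finite
  rules_wf : ∀ q σ, ∀ r ∈ rules q σ, RhsWf rankΔ rankQ (rankΓ σ) (rankQ q) r

/-- The rule selector of a plain mtt. -/
def MTT.sel (M : MTT Γ Δ Q) : Q → Γ → List (RTree Γ) → Set (Rhs Δ Q) :=
  plainSel M.rules

end MttF
namespace MttF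

/-- Input alphabet of `M_ex`: `a` of rank 1 and `e` of rank 0. -/
inductive GE : Type | a | e

def rkGE : GE → ℕ | .a => 1 | .e => 0

/-- Output alphabet of `M_ex`: `f`, `g` of rank 2 and `e` of rank 0. -/
inductive DE : Type | f | g | e

def rkDE : DE → ℕ | .f => 2 | .g => 2 | .e => 0

/-- States of `M_ex`: `start` of rank 0 and `double` of rank 1. -/
inductive QE : Type | start | double

def rkQE : QE → ℕ | .start => 0 | .double => 1

/-- The rules of `M_ex`:
`⟨start, a(x₁)⟩ → ⟨double, x₁⟩(⟨double, x₁⟩(e))`,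
`⟨double, a(x₁)⟩(y₁) → ⟨double, x₁⟩(⟨double, x₁⟩(y₁))`,
`⟨double, e⟩(y₁) → f(y₁,y₁)`, and `⟨double, e⟩(y₁) → g(y₁,y₁)`. -/
def rulesEx : QE → GE → Set (Rhs DE QE)
  | .start, .a =>
      {.node (.call .double 0) [.node (.call .double 0) [.node (.out .e) []]]}
  | .double, .a =>
      {.node (.call .double 0) [.node (.call .double 0) [.node (.param 0) []]]}
  | .double, .e =>
      {.node (.out .f) [.node (.param 0) [], .node (.param 0) []],
       .node (.out .g) [.node (.param 0) [], .node (.param 0) []]}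
  | .start, .e => ∅

/-- The input tree `s_n = a(a(⋯a(e)⋯))` with `n` `a`-nodes. -/
def sN : ℕ → RTree GE
  | 0 => .node .e []
  | n+1 => .node .a [sN n]

/-- `Perfect h t` holds iff `t` is a perfect `{f,g}`-tree of height `h`:
every leaf is labeled `e` and lies at depth exactly `h`, and every internal
node is labeled `f` or `g` (and has two children). -/
inductive Perfect : ℕ → RTree DE → Prop
  | leaf : Perfect 0 (.node .e [])
  | node {h : ℕ} {d : DE} {l r : RTree DE} (hd : d = .f ∨ d = .g)
      (hl : Perfect h l) (hr : Perfect h r) :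
      Perfect (h+1) (.node d [l, r])

/-! ### Auxiliary development for the proof -/

section Aux

theorem RTree.map_node {α β : Type} (f : α → β) (a : α) (ts : List (RTree α)) :
    RTree.map f (.node a ts) = .node (f a) (ts.map (RTree.map f)) := by
  rw [RTree.map]
  congr 1
  rw [show (fun (x : {x // x ∈ ts}) => RTree.map f x.1) = RTree.map f ∘ Subtype.val from rfl,
    ← List.map_map]
  simp

/-- perfect `{f,g}`-trees of height `h` whose leaves each satisfy `S` (independently). -/
inductive PerfOI (S : OT DE → Prop) : ℕ → OT DE → Prop
  | leaf {t : OT DE} : S t → PerfOI S 0 t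
  | node {h : ℕ} {d : DE} {l r : OT DE} (hd : d = .f ∨ d = .g)
      (hl : PerfOI S h l) (hr : PerfOI S h r) : PerfOI S (h+1) (.node (.out d) [l, r])

/-- the parameter tree `y₀` -/
def yP : OT DE := .node (.param 0) []
/-- the output tree `e` -/
def eO : OT DE := .node (.out .e) []

theorem perfOI_mono {S S' : OT DE → Prop} (hS : ∀ t, S t → S' t) :
    ∀ {h t}, PerfOI S h t → PerfOI S' h t := by
  intro h t hp
  induction hp with
  | leaf h => exact .leaf (hS _ h)
  | node hd hl hr ihl ihr => exact .node hd ihl ihr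

theorem perfOI_congr {S S' : OT DE → Prop} (hS : ∀ t, S t ↔ S' t) {h t} :
    PerfOI S h t ↔ PerfOI S' h t :=
  ⟨perfOI_mono (fun t => (hS t).1), perfOI_mono (fun t => (hS t).2)⟩

theorem perfOI_zero {S : OT DE → Prop} {t} : PerfOI S 0 t ↔ S t := by
  constructor
  · rintro (⟨h⟩ | _); exact h
  · exact .leaf

theorem perfOI_add {S : OT DE → Prop} :
    ∀ (h1 : ℕ) {h2 t}, PerfOI (PerfOI S h2) h1 t ↔ PerfOI S (h1 + h2) t := by
  intro h1
  induction h1 with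
  | zero => intro h2 t; rw [perfOI_zero]; simp
  | succ h1 ih =>
    intro h2 t
    constructor
    · rintro (⟨h⟩ | ⟨hd, hl, hr⟩)
      exact (Nat.succ_add h1 h2) ▸ .node hd (ih.1 hl) (ih.1 hr)
    · rw [Nat.succ_add]
      rintro (_ | ⟨hd, hl, hr⟩)
      exact .node hd (ih.2 hl) (ih.2 hr)

end Aux
section Aux2

/-- The rule selector of `M_ex`. -/
abbrev selEx : QE → GE → List (RTree GE) → Set (Rhs DE QE) := plainSel rulesEx

theorem semOI_param {t} : SemOI selEx (.node (.param 0) []) t ↔ t = yP := by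
  constructor
  · intro h; cases h; rfl
  · rintro rfl; exact .param 0

theorem semOI_e {t} : SemOI selEx (.node (.out DE.e) []) t ↔ t = eO := by
  constructor
  · intro h
    cases h with
    | out hlen hi =>
      obtain rfl := List.length_eq_zero_iff.1 (by simpa using hlen)
      rfl
  · rintro rfl; exact .out (by simp) (fun i => i.elim0)

theorem semOI_out2 {d : DE} {u1 u2 t1 t2} (h1 : SemOI selEx u1 t1) (h2 : SemOI selEx u2 t2) :
    SemOI selEx (.node (.out d) [u1, u2]) (.node (.out d) [t1, t2]) :=
  .out rfl (fun i => match i with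
    | ⟨0, _⟩ => h1
    | ⟨1, _⟩ => h2)

theorem semOI_out2_inv {d : DE} {u1 u2 t} (h : SemOI selEx (.node (.out d) [u1, u2]) t) :
    ∃ t1 t2, t = .node (.out d) [t1, t2] ∧ SemOI selEx u1 t1 ∧ SemOI selEx u2 t2 := by
  cases h with
  | out hlen hi =>
    obtain ⟨t1, t2, rfl⟩ := List.length_eq_two.1 (by simpa using hlen)
    exact ⟨t1, t2, rfl, hi ⟨0, by simp⟩, hi ⟨1, by simp⟩⟩

theorem oisub_param {u : ST GE DE QE} {t} :
    OISub selEx [u] (.node (.param 0) []) t ↔ SemOI selEx u t := by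
  constructor
  · intro h
    cases h with
    | param hlt hs => exact hs
  · intro h; exact .param (by simp) h

theorem oisub_out2 {us : List (ST GE DE QE)} {d : DE} {l r l' r' : OT DE}
    (h1 : OISub selEx us l l') (h2 : OISub selEx us r r') :
    OISub selEx us (.node (.out d) [l, r]) (.node (.out d) [l', r']) :=
  .out rfl (fun i => match i with
    | ⟨0, _⟩ => h1
    | ⟨1, _⟩ => h2)

theorem oisub_out2_inv {us : List (ST GE DE QE)} {d : DE} {l r t : OT DE}
    (h : OISub selEx us (.node (.out d) [l, r]) t) :
    ∃ l' r', t = .node (.out d) [l', r'] ∧ OISub selEx us l l' ∧ OISub selEx us r r' := by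
  cases h with
  | out hlen hi =>
    obtain ⟨l', r', rfl⟩ := List.length_eq_two.1 (by simpa using hlen)
    exact ⟨l', r', rfl, hi ⟨0, by simp⟩, hi ⟨1, by simp⟩⟩

theorem oisub_out0_inv {us : List (ST GE DE QE)} {d : DE} {t : OT DE}
    (h : OISub selEx us (.node (.out d) []) t) : t = .node (.out d) [] := by
  cases h with
  | out hlen hi =>
    obtain rfl := List.length_eq_zero_iff.1 (by simpa using hlen)
    rfl

end Aux2
section Aux3

theorem substX_rfg (d : DE) :
    substX ([] : List (RTree GE)) (.node (.out d) [.node (.param 0) [], .node (.param 0) []])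
      = (.node (.out d) [.node (.param 0) [], .node (.param 0) []] : ST GE DE QE) := by
  simp [substX, RTree.map_node, RLab.subst]

theorem substX_ra (s : RTree GE) :
    substX [s] (.node (.call QE.double 0) [.node (.call QE.double 0) [.node (.param 0) []]])
      = (.node (.call .double s) [.node (.call .double s) [.node (.param 0) []]] : ST GE DE QE) := by
  simp [substX, RTree.map_node, RLab.subst]

theorem substX_rstart (s : RTree GE) :
    substX [s] (.node (.call QE.double 0) [.node (.call QE.double 0) [.node (.out DE.e) []]])
      = (.node (.call .double s) [.node (.call .double s) [.node (.out DE.e) []]] : ST GE DE QE) := by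
  simp [substX, RTree.map_node, RLab.subst]

theorem oiparam_bwd {u : ST GE DE QE} {h t₀} (hp : PerfOI (· = yP) h t₀) :
    ∀ {t}, OISub selEx [u] t₀ t → PerfOI (SemOI selEx u) h t := by
  induction hp with
  | leaf hy =>
    intro t hs
    subst hy
    exact .leaf (oisub_param.1 hs)
  | node hd hl hr ihl ihr =>
    intro t hs
    obtain ⟨l', r', rfl, h1, h2⟩ := oisub_out2_inv hs
    exact .node hd (ihl h1) (ihr h2)

theorem oiparam_fwd {u : ST GE DE QE} {h t} (hp : PerfOI (SemOI selEx u) h t) :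
    ∃ t₀, PerfOI (· = yP) h t₀ ∧ OISub selEx [u] t₀ t := by
  induction hp with
  | leaf hs => exact ⟨yP, .leaf rfl, oisub_param.2 hs⟩
  | node hd hl hr ihl ihr =>
    obtain ⟨l₀, hl₀, hsl⟩ := ihl
    obtain ⟨r₀, hr₀, hsr⟩ := ihr
    exact ⟨_, .node hd hl₀ hr₀, oisub_out2 hsl hsr⟩

theorem double_sem : ∀ (k : ℕ) (u : ST GE DE QE) (t : OT DE),
    SemOI selEx (.node (.call .double (sN k)) [u]) t ↔ PerfOI (SemOI selEx u) (2 ^ k) t := by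
  intro k
  induction k with
  | zero =>
    intro u t
    rw [pow_zero]
    constructor
    · intro h
      simp only [sN] at h
      cases h with
      | call hr h₀ hs =>
        simp only [selEx, plainSel, rulesEx, Set.mem_insert_iff, Set.mem_singleton_iff] at hr
        rcases hr with rfl | rfl <;>
        · rw [substX_rfg] at h₀
          obtain ⟨t1, t2, rfl, ht1, ht2⟩ := semOI_out2_inv h₀
          obtain rfl := semOI_param.1 ht1
          obtain rfl := semOI_param.1 ht2
          obtain ⟨l', r', rfl, hsl, hsr⟩ := oisub_out2_inv hs
          exact .node (by simp) (.leaf (oisub_param.1 hsl)) (.leaf (oisub_param.1 hsr))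
    · rintro (_ | ⟨hd, hl, hr⟩)
      rw [perfOI_zero] at hl hr
      simp only [sN]
      rcases hd with rfl | rfl
      · exact .call (r := .node (.out DE.f) [.node (.param 0) [], .node (.param 0) []])
          (by simp [selEx, plainSel, rulesEx])
          (by rw [substX_rfg]; exact semOI_out2 (semOI_param.2 rfl) (semOI_param.2 rfl))
          (oisub_out2 (oisub_param.2 hl) (oisub_param.2 hr))
      · exact .call (r := .node (.out DE.g) [.node (.param 0) [], .node (.param 0) []])
          (by simp [selEx, plainSel, rulesEx])
          (by rw [substX_rfg]; exact semOI_out2 (semOI_param.2 rfl) (semOI_param.2 rfl))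
          (oisub_out2 (oisub_param.2 hl) (oisub_param.2 hr))
  | succ k ih =>
    intro u t
    have h2 : (2:ℕ) ^ (k+1) = 2 ^ k + 2 ^ k := by rw [pow_succ]; omega
    have hinner : ∀ t', SemOI selEx
        (.node (.call .double (sN k)) [(.node (.param 0) [] : ST GE DE QE)]) t'
        ↔ PerfOI (· = yP) (2 ^ k) t' := by
      intro t'
      rw [ih]
      exact perfOI_congr (fun t => semOI_param)
    have hsub : ∀ t', SemOI selEx
        (.node (.call .double (sN k)) [.node (.call .double (sN k)) [.node (.param 0) []]]) t'
        ↔ PerfOI (· = yP) (2 ^ (k+1)) t' := by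
      intro t'
      rw [ih, perfOI_congr (fun t => hinner t), perfOI_add, h2]
    constructor
    · intro h
      simp only [sN] at h
      cases h with
      | call hr h₀ hs =>
        simp only [selEx, plainSel, rulesEx, Set.mem_singleton_iff] at hr
        subst hr
        rw [substX_ra] at h₀
        exact oiparam_bwd ((hsub _).1 h₀) hs
    · intro hp
      obtain ⟨t₀, hp₀, hs⟩ := oiparam_fwd hp
      simp only [sN]
      exact .call (r := .node (.call QE.double 0) [.node (.call QE.double 0) [.node (.param 0) []]])
        (by simp [selEx, plainSel, rulesEx])
        (by rw [substX_ra]; exact (hsub _).2 hp₀) hs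

end Aux3
section Aux4

theorem perfOI_succ_inv {S : OT DE → Prop} {h t} (hp : PerfOI S (h+1) t) :
    ∃ d l r, t = .node (.out d) [l, r] ∧ (d = DE.f ∨ d = DE.g) ∧ PerfOI S h l ∧ PerfOI S h r := by
  cases hp with
  | node hd hl hr => exact ⟨_, _, _, rfl, hd, hl, hr⟩

theorem oisub_nil_self {h t₀} (hp : PerfOI (· = eO) h t₀) : OISub selEx [] t₀ t₀ := by
  induction hp with
  | leaf hy => subst hy; exact .out rfl (fun i => i.elim0)
  | node hd hl hr ihl ihr => exact oisub_out2 ihl ihr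

theorem oisub_nil_eq {h t₀} (hp : PerfOI (· = eO) h t₀) :
    ∀ {t}, OISub selEx [] t₀ t → t = t₀ := by
  induction hp with
  | leaf hy => intro t hs; subst hy; exact oisub_out0_inv hs
  | node hd hl hr ihl ihr =>
    intro t hs
    obtain ⟨l', r', rfl, h1, h2⟩ := oisub_out2_inv hs
    rw [ihl h1, ihr h2]

theorem start_sem (m : ℕ) (t : OT DE) :
    SemOI selEx (.node (.call .start (sN (m+1))) []) t ↔ PerfOI (· = eO) (2 ^ (m+1)) t := by
  have h2 : (2:ℕ) ^ (m+1) = 2 ^ m + 2 ^ m := by rw [pow_succ]; omega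
  have hin : ∀ t', SemOI selEx
      (.node (.call .double (sN m)) [(.node (.out DE.e) [] : ST GE DE QE)]) t'
      ↔ PerfOI (· = eO) (2 ^ m) t' := by
    intro t'
    rw [double_sem]
    exact perfOI_congr (fun t => semOI_e)
  have hsub : ∀ t', SemOI selEx
      (.node (.call .double (sN m)) [.node (.call .double (sN m)) [.node (.out DE.e) []]]) t'
      ↔ PerfOI (· = eO) (2 ^ (m+1)) t' := by
    intro t'
    rw [double_sem, perfOI_congr (fun t => hin t), perfOI_add, h2]
  constructor
  · intro h
    simp only [sN] at h
    cases h with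
    | call hr h₀ hs =>
      simp only [selEx, plainSel, rulesEx, Set.mem_singleton_iff] at hr
      subst hr
      rw [substX_rstart] at h₀
      have hp := (hsub _).1 h₀
      obtain rfl := oisub_nil_eq hp hs
      exact hp
  · intro hp
    simp only [sN]
    exact .call (r := .node (.call QE.double 0) [.node (.call QE.double 0) [.node (.out DE.e) []]])
      (by simp [selEx, plainSel, rulesEx])
      (by rw [substX_rstart]; exact (hsub _).2 hp)
      (oisub_nil_self hp)

theorem embed_node (a : DE) (ts : List (RTree DE)) :
    embed (.node a ts) = .node (.out a) (ts.map embed) := RTree.map_node _ _ _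

theorem perfect_embed : ∀ {h : ℕ} {t : RTree DE}, Perfect h t ↔ PerfOI (· = eO) h (embed t) := by
  have fwd : ∀ {h t}, Perfect h t → PerfOI (· = eO) h (embed t) := by
    intro h t hp
    induction hp with
    | leaf => exact .leaf (by simp [embed, RTree.map_node, eO])
    | node hd hl hr ihl ihr =>
      rw [embed_node]
      simp only [List.map]
      exact .node hd ihl ihr
  have bwd : ∀ (h : ℕ) (t : RTree DE), PerfOI (· = eO) h (embed t) → Perfect h t := by
    intro h
    induction h with
    | zero =>
      intro t hp
      rw [perfOI_zero] at hp
      cases t with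
      | node a ts =>
        rw [embed_node] at hp
        simp only [eO, RTree.node.injEq, OLab.out.injEq, List.map_eq_nil_iff] at hp
        obtain ⟨rfl, rfl⟩ := hp
        exact .leaf
    | succ h ih =>
      intro t hp
      obtain ⟨d, l, r, heq, hd, hl, hr⟩ := perfOI_succ_inv hp
      cases t with
      | node a ts =>
        rw [embed_node] at heq
        simp only [RTree.node.injEq, OLab.out.injEq] at heq
        obtain ⟨rfl, hts⟩ := heq
        obtain ⟨t1, t2, rfl⟩ : ∃ a b, ts = [a, b] :=
          List.length_eq_two.1 (by have := congrArg List.length hts; simpa using this)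
        simp only [List.map, List.cons.injEq, and_true] at hts
        obtain ⟨rfl, rfl⟩ := hts
        exact .node hd (ih _ hl) (ih _ hr)
  intro h t
  exact ⟨fwd, bwd _ _⟩

end Aux4
section Aux5

/-- Codes for perfect `{f,g}`-trees of height `h`. -/
def codeT : ℕ → Type
  | 0 => PUnit
  | h+1 => Bool × codeT h × codeT h

def codeTFintype : ∀ h, Fintype (codeT h)
  | 0 => inferInstanceAs (Fintype PUnit)
  | h+1 => letI := codeTFintype h; inferInstanceAs (Fintype (Bool × codeT h × codeT h))

attribute [instance] codeTFintype

/-- Decoding a code into a perfect tree. -/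
def toTree : (h : ℕ) → codeT h → RTree DE
  | 0, _ => .node .e []
  | h+1, (b, c1, c2) => .node (if b then .f else .g) [toTree h c1, toTree h c2]

theorem perfect_toTree : ∀ (h : ℕ) (c : codeT h), Perfect h (toTree h c)
  | 0, _ => .leaf
  | h+1, (b, c1, c2) =>
    .node (by cases b <;> simp) (perfect_toTree h c1) (perfect_toTree h c2)

theorem toTree_surj : ∀ {h : ℕ} {t : RTree DE}, Perfect h t → ∃ c, toTree h c = t := by
  intro h t hp
  induction hp with
  | leaf => exact ⟨PUnit.unit, rfl⟩
  | node hd hl hr ihl ihr =>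
    obtain ⟨c1, rfl⟩ := ihl
    obtain ⟨c2, rfl⟩ := ihr
    rcases hd with rfl | rfl
    · exact ⟨(true, c1, c2), rfl⟩
    · exact ⟨(false, c1, c2), rfl⟩

theorem toTree_inj : ∀ h, Function.Injective (toTree h) := by
  intro h
  induction h with
  | zero => intro c1 c2 _; exact @Subsingleton.elim PUnit _ c1 c2
  | succ h ih =>
    rintro ⟨b1, c1, c1'⟩ ⟨b2, c2, c2'⟩ heq
    simp only [toTree, RTree.node.injEq, List.cons.injEq, and_true] at heq
    obtain ⟨hb, h1, h2⟩ := heq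
    have hb' : b1 = b2 := by
      cases b1 <;> cases b2 <;> simp_all
    rw [hb', ih h1, ih h2]

theorem perfect_eq_range (h : ℕ) : {t : RTree DE | Perfect h t} = Set.range (toTree h) := by
  ext t
  constructor
  · intro hp; exact toTree_surj hp
  · rintro ⟨c, rfl⟩; exact perfect_toTree h c

theorem card_codeT : ∀ h, Nat.card (codeT h) = 2 ^ (2 ^ h - 1)
  | 0 => by
    show Nat.card PUnit = _
    simp
  | h+1 => by
    have ih := card_codeT h
    have h1 : (1:ℕ) ≤ 2 ^ h := Nat.one_le_two_pow
    have hexp : 2 ^ (h+1) - 1 = (2 ^ h - 1) + ((2 ^ h - 1) + 1) := by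
      rw [pow_succ]; omega
    show Nat.card (Bool × codeT h × codeT h) = _
    have hbool : Nat.card Bool = 2 := by simp
    rw [Nat.card_prod, Nat.card_prod, ih, hexp, pow_add, pow_add, pow_one, hbool]
    ring

theorem ncard_perfect (h : ℕ) : {t : RTree DE | Perfect h t}.ncard = 2 ^ (2 ^ h - 1) := by
  rw [perfect_eq_range, ← Nat.card_coe_set_eq, Nat.card_range_of_injective (toTree_inj h),
    card_codeT]

end Aux5

/-- For every `n ≥ 1`, the set `⟦⟨start, s_n⟩⟧_OI` of outputs of the
mtt `M_ex` in OI-mode on input `s_n` equals the set of all perfect `{f,g}`-trees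
of height `2^n`; in particular, this set has cardinality `2^(2^(2^n) − 1)`. -/
theorem oi_outputs_of_Mex (n : ℕ) (hn : 1 ≤ n) :
    ({t : RTree DE | SemOI (plainSel rulesEx) (.node (.call .start (sN n)) []) (embed t)}
        = {t | Perfect (2^n) t}) ∧
    {t : RTree DE | SemOI (plainSel rulesEx) (.node (.call .start (sN n)) []) (embed t)}.ncard
        = 2 ^ (2 ^ 2 ^ n - 1) := by
  obtain ⟨m, rfl⟩ : ∃ m, n = m + 1 := ⟨n - 1, by omega⟩
  have hset : {t : RTree DE | SemOI (plainSel rulesEx) (.node (.call .start (sN (m+1))) []) (embed t)}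
      = {t | Perfect (2^(m+1)) t} := by
    ext t
    simp only [Set.mem_setOf_eq]
    rw [show plainSel rulesEx = selEx from rfl, start_sem m, ← perfect_embed]
  refine ⟨hset, ?_⟩
  rw [hset, ncard_perfect]

end MttF
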